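/- If g is a κ-FN mapping on a partial order B and C is a suborder of B closed under g (g(c) ⊆ C for all c ∈ C), then C ≤_κ B. -/
import Mathlib


universe u v

open Cardinal

/-- `f` is a κ-Freese-Nation mapping on the partial order `P`. -/
def IsFNMap (κ : Cardinal.{u}) {P : Type u} [PartialOrder P] (f : P → Set P) : Prop :=
  (∀ a, #(f a) < κ) ∧
    ∀ a b : P, a ≤ b → ∃ c, c ∈ f a ∧ c ∈ f b ∧ a ≤ c ∧ c ≤ b

/-- The partial order `P` has the κ-Freese-Nation property. -/
def HasFN (κ : Cardinal.{u}) (P : Type u) [PartialOrder P] : Prop :=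
  ∃ f : P → Set P, IsFNMap κ f

/-- `A` is a κ-substructure of the ambient partial order `P`: for every `b : P`,
`{a ∈ A | a ≤ b}` has a cofinal subset of size `< κ` and `{a ∈ A | b ≤ a}` has a
coinitial subset of size `< κ`. -/
def SubKappa (κ : Cardinal.{u}) {P : Type u} [PartialOrder P] (A : Set P) : Prop :=
  ∀ b : P,
    (∃ U : Set P, U ⊆ A ∧ #U < κ ∧ (∀ u ∈ U, u ≤ b) ∧
      (∀ a ∈ A, a ≤ b → ∃ u ∈ U, a ≤ u)) ∧
    (∃ V : Set P, V ⊆ A ∧ #V < κ ∧ (∀ v ∈ V, b ≤ v) ∧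
      (∀ a ∈ A, b ≤ a → ∃ v ∈ V, v ≤ a))

/-- `A ≤_κ B` for two subsets of an ambient partial order:
`A ⊆ B` and `A` is a κ-substructure of the suborder `B`. -/
def RelSubKappa (κ : Cardinal.{u}) {P : Type u} [PartialOrder P] (A B : Set P) : Prop :=
  A ⊆ B ∧ SubKappa κ {x : B | (x : P) ∈ A}


/-- If g is a κ-FN mapping on B and C ⊆ B is closed under g, then C ≤_κ B. -/
theorem statement6 (κ : Cardinal.{u}) {B : Type u} [PartialOrder B]
    (g : B → Set B) (hg : IsFNMap κ g) (C : Set B) (hC : ∀ c ∈ C, g c ⊆ C) :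
    SubKappa κ C := by
  obtain ⟨hsmall, hfn⟩ := hg
  intro b
  constructor
  · refine ⟨{u ∈ g b | u ∈ C ∧ u ≤ b}, fun u hu => hu.2.1, ?_, fun u hu => hu.2.2, ?_⟩
    · exact lt_of_le_of_lt (Cardinal.mk_le_mk_of_subset (fun u hu => hu.1)) (hsmall b)
    · intro a ha hab
      obtain ⟨c, hc1, hc2, hc3, hc4⟩ := hfn a b hab
      exact ⟨c, ⟨hc2, hC a ha hc1, hc4⟩, hc3⟩
  · refine ⟨{v ∈ g b | v ∈ C ∧ b ≤ v}, fun v hv => hv.2.1, ?_, fun v hv => hv.2.2, ?_⟩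
    · exact lt_of_le_of_lt (Cardinal.mk_le_mk_of_subset (fun v hv => hv.1)) (hsmall b)
    · intro a ha hba
      obtain ⟨c, hc1, hc2, hc3, hc4⟩ := hfn b a hba
      exact ⟨c, ⟨hc1, hC a ha hc2, hc3⟩, hc4⟩
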